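/- For positive definite density matrices ρ, σ, the χ² divergence with f(t) = (1+t)/2 (largest element of F_op), given by χ²(ρ,σ) = Tr((ρ-σ) C(ρ-σ)) where C is the inverse of the superoperator A ↦ (σA + Aσ)/2, is jointly convex in (ρ,σ). -/

import Mathlib

open Matrix ComplexOrder

variable {n : ℕ}

lemma rsmul (r : ℝ) (M : Matrix (Fin n) (Fin n) ℂ) : r • M = (r:ℂ) • M := by
  ext i j; simp [Matrix.smul_apply, Complex.real_smul]

lemma trace_re_nonneg {M : Matrix (Fin n) (Fin n) ℂ} (hM : M.PosSemidef) :
    0 ≤ M.trace.re := by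
  have h : ∀ i, 0 ≤ M i i := fun i => hM.diag_nonneg
  have : ∀ i, 0 ≤ (M i i).re := fun i => (Complex.le_def.mp (h i)).1
  simp only [Matrix.trace, Matrix.diag, Complex.re_sum]
  exact Finset.sum_nonneg fun i _ => this i

lemma pos_part {σ : Matrix (Fin n) (Fin n) ℂ} (hσ : σ.PosSemidef)
    (w : Matrix (Fin n) (Fin n) ℂ) :
    0 ≤ ((wᴴ * (σ * w + w * σ)).trace).re := by
  have h1 : (wᴴ * σ * w).PosSemidef := hσ.conjTranspose_mul_mul_same w
  have h2 : (w * σ * wᴴ).PosSemidef := hσ.mul_mul_conjTranspose_same w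
  have he : (wᴴ * (σ * w + w * σ)).trace = (wᴴ * σ * w).trace + (w * σ * wᴴ).trace := by
    rw [mul_add, trace_add, ← mul_assoc]
    congr 1
    rw [Matrix.trace_mul_comm, mul_assoc]
  rw [he, Complex.add_re]
  exact add_nonneg (trace_re_nonneg h1) (trace_re_nonneg h2)

-- symmetry of the sesquilinear form
lemma sym {σ : Matrix (Fin n) (Fin n) ℂ} (hσ : σ.IsHermitian)
    (A B : Matrix (Fin n) (Fin n) ℂ) :
    (Aᴴ * (σ * B + B * σ)).trace = ((σ * A + A * σ)ᴴ * B).trace := by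
  have h : (σ * A + A * σ)ᴴ = Aᴴ * σ + σ * Aᴴ := by
    rw [conjTranspose_add, conjTranspose_mul, conjTranspose_mul, hσ.eq]
  rw [h, mul_add, add_mul, trace_add, trace_add, ← mul_assoc]
  congr 1
  rw [Matrix.trace_mul_comm Aᴴ (B*σ), Matrix.trace_mul_comm (σ*Aᴴ) B, mul_assoc]

-- for X Hermitian, re Tr(Aᴴ X) = re Tr(X A)
lemma herm_re {X A : Matrix (Fin n) (Fin n) ℂ} (hX : X.IsHermitian) :
    ((Aᴴ * X).trace).re = ((X * A).trace).re := by
  have : (X * A).trace = star (Aᴴ * X).trace := by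
    rw [← Matrix.trace_conjTranspose, conjTranspose_mul, conjTranspose_conjTranspose, hX.eq]
  rw [this, Complex.star_def, Complex.conj_re]

lemma posDef_mix {A B : Matrix (Fin n) (Fin n) ℂ} (hA : A.PosDef) (hB : B.PosDef)
    {l : ℝ} (hl0 : 0 ≤ l) (hl1 : l ≤ 1) :
    ((l:ℂ) • A + ((1 - l : ℝ):ℂ) • B).PosDef := by
  refine Matrix.PosDef.of_dotProduct_mulVec_pos ?_ ?_
  · have h1 : ((l:ℂ) • A).IsHermitian := by
      simp [Matrix.IsHermitian, conjTranspose_smul, hA.1.eq, Complex.conj_ofReal]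
    have h2 : (((1 - l : ℝ):ℂ) • B).IsHermitian := by
      simp [Matrix.IsHermitian, conjTranspose_smul, hB.1.eq, Complex.conj_ofReal]
    exact h1.add h2
  · intro x hx
    have ha := hA.dotProduct_mulVec_pos hx
    have hb := hB.dotProduct_mulVec_pos hx
    have hexp : star x ⬝ᵥ (((l:ℂ) • A + ((1 - l : ℝ):ℂ) • B) *ᵥ x)
        = (l:ℂ) * (star x ⬝ᵥ (A *ᵥ x)) + ((1 - l : ℝ):ℂ) * (star x ⬝ᵥ (B *ᵥ x)) := by
      simp [add_mulVec, Matrix.smul_mulVec, dotProduct_add, dotProduct_smul, smul_eq_mul]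
    rw [hexp]
    rw [Complex.lt_def] at ha hb ⊢
    obtain ⟨ha1, ha2⟩ := ha
    obtain ⟨hb1, hb2⟩ := hb
    simp only [Complex.zero_re, Complex.zero_im] at ha1 ha2 hb1 hb2 ⊢
    constructor
    · simp only [Complex.zero_re, Complex.add_re, Complex.mul_re, Complex.ofReal_re,
        Complex.ofReal_im, ← ha2, ← hb2]
      rcases eq_or_lt_of_le hl0 with h | h
      · nlinarith
      · nlinarith [mul_pos h ha1, mul_nonneg (by linarith : (0:ℝ) ≤ 1 - l) hb1.le]
    · simp only [Complex.zero_im, Complex.add_im, Complex.mul_im, Complex.ofReal_re,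
        Complex.ofReal_im, ← ha2, ← hb2]
      ring

/-- For positive definite density matrices `ρ, σ`, the `χ²` divergence with
`f(t) = (1+t)/2` (largest element of `F_op`), given by
`χ²(ρ,σ) = Tr((ρ-σ) C_σ(ρ-σ))` where `C_σ` is the inverse of the superoperator
`A ↦ (σA + Aσ)/2`, is jointly convex in `(ρ,σ)`. -/
theorem chi_sq_largest_convex {n : ℕ} (ρ₁ ρ₂ σ₁ σ₂ : Matrix (Fin n) (Fin n) ℂ)
    (hρ₁ : ρ₁.PosDef) (hρ₂ : ρ₂.PosDef) (hσ₁ : σ₁.PosDef) (hσ₂ : σ₂.PosDef)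
    (hρ₁t : ρ₁.trace = 1) (hρ₂t : ρ₂.trace = 1) (hσ₁t : σ₁.trace = 1) (hσ₂t : σ₂.trace = 1)
    (l : ℝ) (hl0 : 0 ≤ l) (hl1 : l ≤ 1)
    (C : Matrix (Fin n) (Fin n) ℂ →
      Matrix (Fin n) (Fin n) ℂ →ₗ[ℂ] Matrix (Fin n) (Fin n) ℂ)
    (hC : ∀ σ : Matrix (Fin n) (Fin n) ℂ, σ.PosDef →
      ∀ A : Matrix (Fin n) (Fin n) ℂ, σ * C σ A + C σ A * σ = (2 : ℂ) • A) :
    ((((l • ρ₁ + (1 - l) • ρ₂) - (l • σ₁ + (1 - l) • σ₂)) *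
        C (l • σ₁ + (1 - l) • σ₂)
          ((l • ρ₁ + (1 - l) • ρ₂) - (l • σ₁ + (1 - l) • σ₂))).trace).re ≤
      l * (((ρ₁ - σ₁) * C σ₁ (ρ₁ - σ₁)).trace).re +
        (1 - l) * (((ρ₂ - σ₂) * C σ₂ (ρ₂ - σ₂)).trace).re := by
  simp only [rsmul]
  set ρm : Matrix (Fin n) (Fin n) ℂ := (l:ℂ) • ρ₁ + ((1 - l : ℝ):ℂ) • ρ₂ with hρm
  set σm : Matrix (Fin n) (Fin n) ℂ := (l:ℂ) • σ₁ + ((1 - l : ℝ):ℂ) • σ₂ with hσm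
  set X₁ : Matrix (Fin n) (Fin n) ℂ := ρ₁ - σ₁ with hX₁def
  set X₂ : Matrix (Fin n) (Fin n) ℂ := ρ₂ - σ₂ with hX₂def
  set X : Matrix (Fin n) (Fin n) ℂ := ρm - σm with hXdef
  set z : Matrix (Fin n) (Fin n) ℂ := C σm X with hzdef
  set z₁ : Matrix (Fin n) (Fin n) ℂ := C σ₁ X₁ with hz₁def
  set z₂ : Matrix (Fin n) (Fin n) ℂ := C σ₂ X₂ with hz₂def
  have hσmP : σm.PosDef := posDef_mix hσ₁ hσ₂ hl0 hl1
  have hρmP : ρm.PosDef := posDef_mix hρ₁ hρ₂ hl0 hl1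
  have hXh : X.IsHermitian := hρmP.1.sub hσmP.1
  have hX₁h : X₁.IsHermitian := hρ₁.1.sub hσ₁.1
  have hX₂h : X₂.IsHermitian := hρ₂.1.sub hσ₂.1
  have hz : σm * z + z * σm = (2:ℂ) • X := hC σm hσmP X
  have hzi₁ : σ₁ * z₁ + z₁ * σ₁ = (2:ℂ) • X₁ := hC σ₁ hσ₁ X₁
  have hzi₂ : σ₂ * z₂ + z₂ * σ₂ = (2:ℂ) • X₂ := hC σ₂ hσ₂ X₂
  -- the key per-component inequality
  have key : ∀ (σi Xi zi : Matrix (Fin n) (Fin n) ℂ), σi.PosDef → Xi.IsHermitian →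
      σi * zi + zi * σi = (2:ℂ) • Xi →
      2 * ((Xi * z).trace).re - (1/2) * ((zᴴ * (σi * z + z * σi)).trace).re
        ≤ ((Xi * zi).trace).re := by
    intro σi Xi zi hσi hXi hzi
    have h0 := pos_part hσi.posSemidef (zi - z)
    have hw2 : σi * (zi - z) + (zi - z) * σi
        = (σi * zi + zi * σi) - (σi * z + z * σi) := by noncomm_ring
    have E : ((zi - z)ᴴ * (σi * (zi - z) + (zi - z) * σi)).trace
        = (ziᴴ * (σi * zi + zi * σi)).trace - (ziᴴ * (σi * z + z * σi)).trace
          - (zᴴ * (σi * zi + zi * σi)).trace + (zᴴ * (σi * z + z * σi)).trace := by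
      rw [hw2, conjTranspose_sub, sub_mul, mul_sub, mul_sub, trace_sub, trace_sub, trace_sub]
      ring
    have t1 : (ziᴴ * (σi * zi + zi * σi)).trace = 2 * (ziᴴ * Xi).trace := by
      rw [hzi, Matrix.mul_smul, trace_smul, smul_eq_mul]
    have t2 : (zᴴ * (σi * zi + zi * σi)).trace = 2 * (zᴴ * Xi).trace := by
      rw [hzi, Matrix.mul_smul, trace_smul, smul_eq_mul]
    have t3 : (ziᴴ * (σi * z + z * σi)).trace = 2 * (Xi * z).trace := by
      rw [sym hσi.1 zi z, hzi, conjTranspose_smul, Matrix.smul_mul, trace_smul, hXi.eq]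
      simp [smul_eq_mul]
    rw [E, t1, t2, t3] at h0
    simp only [Complex.add_re, Complex.sub_re, Complex.mul_re, Complex.re_ofNat,
      Complex.im_ofNat] at h0
    rw [herm_re hXi (A := zi), herm_re hXi (A := z)] at h0
    linarith
  have k1 := key σ₁ X₁ z₁ hσ₁ hX₁h hzi₁
  have k2 := key σ₂ X₂ z₂ hσ₂ hX₂h hzi₂
  -- linearity in Xi
  have S1 : ((X * z).trace).re = l * ((X₁ * z).trace).re + (1-l) * ((X₂ * z).trace).re := by
    have hXd : X = (l:ℂ) • X₁ + ((1 - l : ℝ):ℂ) • X₂ := by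
      rw [hXdef, hρm, hσm, hX₁def, hX₂def]
      simp only [smul_sub]; abel
    rw [hXd, add_mul, Matrix.smul_mul, Matrix.smul_mul, trace_add, trace_smul, trace_smul]
    simp only [smul_eq_mul, Complex.add_re, Complex.mul_re, Complex.ofReal_re,
      Complex.ofReal_im]
    ring
  -- linearity in σi
  have S2 : ((zᴴ * (σm * z + z * σm)).trace).re
      = l * ((zᴴ * (σ₁ * z + z * σ₁)).trace).re
        + (1-l) * ((zᴴ * (σ₂ * z + z * σ₂)).trace).re := by
    have hd : σm * z + z * σm
        = (l:ℂ) • (σ₁ * z + z * σ₁) + ((1 - l : ℝ):ℂ) • (σ₂ * z + z * σ₂) := by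
      rw [hσm]
      simp only [add_mul, mul_add, Matrix.smul_mul, Matrix.mul_smul, smul_add]; abel
    rw [hd, mul_add, Matrix.mul_smul, Matrix.mul_smul, trace_add, trace_smul, trace_smul]
    simp only [smul_eq_mul, Complex.add_re, Complex.mul_re, Complex.ofReal_re,
      Complex.ofReal_im]
    ring
  have S3 : ((zᴴ * (σm * z + z * σm)).trace).re = 2 * ((X * z).trace).re := by
    rw [hz, Matrix.mul_smul, trace_smul, smul_eq_mul]
    simp only [Complex.mul_re, Complex.re_ofNat, Complex.im_ofNat]
    rw [herm_re hXh (A := z)]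
    ring
  have m1 := mul_le_mul_of_nonneg_left k1 hl0
  have m2 := mul_le_mul_of_nonneg_left k2 (by linarith : (0:ℝ) ≤ 1 - l)
  linarith
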